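/- arXiv:1412.3032 — 2 statements merged into one kernel-verified Lean document; each statement's English description precedes it below -/
import Mathlib

section
/- Let p be a prime and R a commutative ring with pR = 0. Then the restriction map Res : 𝒲_n(R) → W_n(R) is an isomorphism, where 𝒲_n(R) is the image of the ring homomorphism (Res, F) : W_{n+1}(R) → W_n(R) × W_n(R) and Res denotes projection to the first factor. -/
/-! Statement 1: If `pR = 0`, the projection `Res : 𝒲_n(R) → W_n(R)` to the first factor is
an isomorphism, where `𝒲_n(R) ⊆ W_n(R) × W_n(R)` is the image of
`(Res, F) : W_{n+1}(R) → W_n(R) × W_n(R)`. -/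

/-- The restriction map `W_{n+1}(R) → W_n(R)` on truncated Witt vectors. -/
noncomputable def WittRes (p : ℕ) [Fact p.Prime] (n : ℕ) (R : Type*) [CommRing R] :
    TruncatedWittVector p (n + 1) R →+* TruncatedWittVector p n R :=
  TruncatedWittVector.truncate (Nat.le_succ n)

/-- The Frobenius `W_{n+1}(R) → W_n(R)` on truncated Witt vectors, via a lift to
(untruncated) Witt vectors. -/
noncomputable def WittFrob (p : ℕ) [Fact p.Prime] (n : ℕ) (R : Type*) [CommRing R]
    (x : TruncatedWittVector p (n + 1) R) : TruncatedWittVector p n R :=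
  WittVector.truncate n (WittVector.frobenius x.out)

/-- `𝒲_n(R)`, the image of `(Res, F)` in `W_n(R) × W_n(R)`. -/
noncomputable def WcalSet (p : ℕ) [Fact p.Prime] (n : ℕ) (R : Type*) [CommRing R] :
    Set (TruncatedWittVector p n R × TruncatedWittVector p n R) :=
  Set.range (fun x : TruncatedWittVector p (n + 1) R => (WittRes p n R x, WittFrob p n R x))

lemma frob_trunc_congr (p : ℕ) [Fact p.Prime] (n : ℕ) (R : Type*) [CommRing R] [CharP R p]
    (x y : TruncatedWittVector p (n + 1) R) (h : WittRes p n R x = WittRes p n R y) :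
    WittFrob p n R x = WittFrob p n R y := by
  unfold WittFrob
  ext i
  rw [WittVector.coeff_truncate, WittVector.coeff_truncate,
    WittVector.coeff_frobenius_charP, WittVector.coeff_frobenius_charP]
  have hi : (i : ℕ) < n + 1 := Nat.lt_succ_of_lt i.is_lt
  have hx : x.out.coeff i = x.coeff ⟨i, hi⟩ := TruncatedWittVector.coeff_out x ⟨i, hi⟩
  have hy : y.out.coeff i = y.coeff ⟨i, hi⟩ := TruncatedWittVector.coeff_out y ⟨i, hi⟩
  have hcoef : x.coeff ⟨i, hi⟩ = y.coeff ⟨i, hi⟩ := by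
    have := congrArg (fun w : TruncatedWittVector p n R => w.coeff i) h
    simp [WittRes, TruncatedWittVector.coeff_truncate] at this
    exact this
  rw [hx, hy, hcoef]

theorem stmt1 (p : ℕ) [Fact p.Prime] (n : ℕ) (R : Type*) [CommRing R]
    (hpR : (p : R) = 0) :
    Function.Bijective (fun z : WcalSet p n R => z.val.1) := by
  constructor
  · rintro ⟨⟨a, b⟩, hab⟩ ⟨⟨a', b'⟩, hab'⟩ (h : a = a')
    obtain ⟨x, hx⟩ := hab
    obtain ⟨y, hy⟩ := hab'
    have hx1 : WittRes p n R x = a := congrArg Prod.fst hx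
    have hy1 : WittRes p n R y = a' := congrArg Prod.fst hy
    have hx2 : WittFrob p n R x = b := congrArg Prod.snd hx
    have hy2 : WittFrob p n R y = b' := congrArg Prod.snd hy
    have hb : b = b' := by
      rcases subsingleton_or_nontrivial R with hR | hR
      · haveI : Subsingleton (TruncatedWittVector p n R) :=
          ⟨fun u v => by ext i; exact Subsingleton.elim _ _⟩
        exact Subsingleton.elim _ _
      · haveI : CharP R p := (CharP.charP_iff_prime_eq_zero (Fact.out : p.Prime)).2 hpR
        rw [← hx2, ← hy2]
        exact frob_trunc_congr p n R x y (by rw [hx1, hy1, h])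
    subst h hb
    rfl
  · intro a
    obtain ⟨x, hx⟩ := TruncatedWittVector.truncate_surjective (p := p) (R := R) (Nat.le_succ n) a
    exact ⟨⟨(WittRes p n R x, WittFrob p n R x), ⟨x, rfl⟩⟩, hx⟩
end

section
/- Let p be a prime, n ≥ 1, and S a commutative ring with an ideal 𝔞 ⊆ S equipped with divided powers, such that p is nilpotent in S. The divided Witt polynomials define an isomorphism of W_{n+1}(S)-modules W_{n+1}(𝔞) ≅ ∏_{i=0}^{n} 𝔞_{[w_i]}, where 𝔞_{[w_i]} denotes 𝔞 with the W_{n+1}(S)-module structure given by scalar multiplication through the i-th Witt polynomial w_i : W_{n+1}(S) → S. -/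
/-! Statement 16: For an ideal `𝔞 ⊆ S` with divided powers (`p` nilpotent in `S`), the divided
Witt polynomials give an isomorphism of `W_{n+1}(S)`-modules
`W_{n+1}(𝔞) ≅ ∏_{i=0}^n 𝔞_{[w_i]}`: a bijection `Φ`, additive, compatible with the
`W_{n+1}(S)`-action (via the Witt polynomials `w_i`), whose `i`-th component multiplied by
`p^i` is the `i`-th Witt polynomial. -/

set_option linter.unusedSectionVars false
set_option linter.unusedVariables false
set_option maxHeartbeats 1000000
open Finset MvPolynomial

namespace Stmt16

variable {S : Type*} [CommRing S] {I : Ideal S} (hI : DividedPowers I)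
variable {V : Type*} [DecidableEq V] (P : V → Prop) [DecidablePred P] (σ : V → S)

noncomputable def wt (m : V →₀ ℕ) : ℕ := m.prod fun v k => if P v then Nat.factorial k else 1

lemma wt_eq_prod (m : V →₀ ℕ) {u : Finset V} (hu : m.support ⊆ u) :
    wt P m = ∏ v ∈ u, if P v then Nat.factorial (m v) else 1 :=
  Finsupp.prod_of_support_subset m hu _ fun v _ => by split <;> simp

lemma wt_pos (m : V →₀ ℕ) : 0 < wt P m := by
  rw [wt, Finsupp.prod]
  refine Finset.prod_pos fun v _ => ?_
  split <;> simp [Nat.factorial_pos]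

noncomputable def bc (m₁ m₂ : V →₀ ℕ) : ℕ :=
  ∏ v ∈ (m₁ + m₂).support, if P v then Nat.choose (m₁ v + m₂ v) (m₁ v) else 1

lemma bc_eq_prod (m₁ m₂ : V →₀ ℕ) {u : Finset V} (hu : (m₁ + m₂).support ⊆ u) :
    bc P m₁ m₂ = ∏ v ∈ u, if P v then Nat.choose (m₁ v + m₂ v) (m₁ v) else 1 := by
  refine Finset.prod_subset hu fun v _ hv => ?_
  simp only [Finsupp.mem_support_iff, Finsupp.add_apply, not_not] at hv
  have h1 : m₁ v = 0 := by omega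
  have h2 : m₂ v = 0 := by omega
  simp [h1, h2]

lemma support_subset_add_left (m₁ m₂ : V →₀ ℕ) : m₁.support ⊆ (m₁ + m₂).support := by
  intro v hv; simp only [Finsupp.mem_support_iff, Finsupp.add_apply] at *; omega

lemma support_subset_add_right (m₁ m₂ : V →₀ ℕ) : m₂.support ⊆ (m₁ + m₂).support := by
  intro v hv; simp only [Finsupp.mem_support_iff, Finsupp.add_apply] at *; omega

lemma wt_add (m₁ m₂ : V →₀ ℕ) :
    wt P (m₁ + m₂) = bc P m₁ m₂ * (wt P m₁ * wt P m₂) := by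
  rw [wt_eq_prod P (m₁ + m₂) (le_refl (m₁+m₂).support),
    wt_eq_prod P m₁ (support_subset_add_left m₁ m₂),
    wt_eq_prod P m₂ (support_subset_add_right m₁ m₂),
    bc_eq_prod P m₁ m₂ (le_refl _), ← Finset.prod_mul_distrib, ← Finset.prod_mul_distrib]
  refine Finset.prod_congr rfl fun v _ => ?_
  by_cases h : P v
  · simp only [if_pos h, Finsupp.add_apply]
    have := Nat.choose_mul_factorial_mul_factorial (Nat.le_add_right (m₁ v) (m₂ v))
    simp only [Nat.add_sub_cancel_left] at this
    rw [← this]; ring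
  · simp [if_neg h]

/-- The product of divided powers / powers associated to a monomial exponent. -/
noncomputable def DD (m : V →₀ ℕ) : S :=
  m.prod fun v k => if P v then hI.dpow k (σ v) else σ v ^ k

variable {P σ}

lemma DD_eq_prod (hσ : ∀ v, P v → σ v ∈ I) (m : V →₀ ℕ) {u : Finset V} (hu : m.support ⊆ u) :
    DD hI P σ m = ∏ v ∈ u, if P v then hI.dpow (m v) (σ v) else σ v ^ (m v) :=
  Finsupp.prod_of_support_subset m hu _ fun v _ => by
    split
    · exact hI.dpow_zero (hσ v ‹_›)
    · exact pow_zero _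

lemma DD_mul (hσ : ∀ v, P v → σ v ∈ I) (m₁ m₂ : V →₀ ℕ) :
    DD hI P σ m₁ * DD hI P σ m₂ = (bc P m₁ m₂ : S) * DD hI P σ (m₁ + m₂) := by
  rw [DD_eq_prod hI hσ m₁ (support_subset_add_left m₁ m₂),
    DD_eq_prod hI hσ m₂ (support_subset_add_right m₁ m₂),
    DD_eq_prod hI hσ (m₁ + m₂) (le_refl _), bc, ← Finset.prod_mul_distrib,
    Nat.cast_prod, ← Finset.prod_mul_distrib]
  refine Finset.prod_congr rfl fun v _ => ?_
  by_cases h : P v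
  · simp only [if_pos h, Finsupp.add_apply]
    rw [hI.mul_dpow (hσ v h)]
  · simp [if_neg h, pow_add]

variable (P σ)

/-- formal evaluation of divided monomial combinations in `S` -/
noncomputable def ev : ((V →₀ ℕ) →₀ ℤ) →ₗ[ℤ] S :=
  Finsupp.linearCombination ℤ (DD hI P σ)

/-- embedding of divided monomial combinations into rational polynomials -/
noncomputable def emb : ((V →₀ ℕ) →₀ ℤ) →ₗ[ℤ] MvPolynomial V ℚ :=
  Finsupp.linearCombination ℤ (fun m => ((wt P m : ℚ))⁻¹ • monomial m (1 : ℚ))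

variable {P σ}

lemma ev_single (m : V →₀ ℕ) (k : ℤ) : ev hI P σ (Finsupp.single m k) = k • DD hI P σ m :=
  Finsupp.linearCombination_single ℤ k m

lemma emb_single (m : V →₀ ℕ) (k : ℤ) :
    emb P (Finsupp.single m k) = (k : ℚ) • ((wt P m : ℚ))⁻¹ • monomial m (1 : ℚ) := by
  rw [emb, Finsupp.linearCombination_single, ← Int.cast_smul_eq_zsmul ℚ]

lemma coeff_emb (c : (V →₀ ℕ) →₀ ℤ) (m : V →₀ ℕ) :
    coeff m (emb P c) = (c m : ℚ) / (wt P m : ℚ) := by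
  classical
  rw [emb, Finsupp.linearCombination_apply, Finsupp.sum]
  rw [show coeff m (∑ m' ∈ c.support, c m' • (wt P m' : ℚ)⁻¹ • monomial m' (1:ℚ))
      = ∑ m' ∈ c.support, (c m' : ℚ) * ((wt P m' : ℚ)⁻¹ * coeff m (monomial m' (1:ℚ))) by
    rw [coeff_sum]
    exact Finset.sum_congr rfl fun m' _ => by
      rw [← Int.cast_smul_eq_zsmul ℚ, coeff_smul, coeff_smul, smul_eq_mul, smul_eq_mul]]
  rw [Finset.sum_eq_single m]
  · rw [coeff_monomial, if_pos rfl, mul_one, div_eq_mul_inv]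
  · intro m' _ hne
    rw [coeff_monomial, if_neg hne, mul_zero, mul_zero]
  · intro hm
    rw [Finsupp.notMem_support_iff.mp hm]
    simp

lemma emb_inj {c d : (V →₀ ℕ) →₀ ℤ} (h : emb P c = emb P d) : c = d := by
  ext m
  have h2 := congrArg (coeff m) h
  rw [coeff_emb, coeff_emb] at h2
  have hwt : (wt P m : ℚ) ≠ 0 := Nat.cast_ne_zero.mpr (wt_pos P m).ne'
  field_simp at h2
  exact_mod_cast h2

/-- convolution product -/
noncomputable def cnv (c d : (V →₀ ℕ) →₀ ℤ) : (V →₀ ℕ) →₀ ℤ :=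
  c.sum fun m₁ k₁ => d.sum fun m₂ k₂ => Finsupp.single (m₁ + m₂) (k₁ * k₂ * bc P m₁ m₂)

lemma emb_conv (c d : (V →₀ ℕ) →₀ ℤ) : emb P (cnv (P := P) c d) = emb P c * emb P d := by
  rw [cnv, map_finsuppSum]
  rw [show (emb P c * emb P d : MvPolynomial V ℚ)
      = c.sum fun m₁ k₁ => d.sum fun m₂ k₂ =>
        (k₁ • ((wt P m₁ : ℚ))⁻¹ • monomial m₁ (1:ℚ)) * (k₂ • ((wt P m₂ : ℚ))⁻¹ • monomial m₂ (1:ℚ)) by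
    rw [emb, Finsupp.linearCombination_apply, Finsupp.sum_mul]
    exact Finsupp.sum_congr fun m₁ _ => by
      rw [Finsupp.linearCombination_apply, Finsupp.mul_sum]]
  refine Finsupp.sum_congr fun m₁ _ => ?_
  rw [map_finsuppSum]
  refine Finsupp.sum_congr fun m₂ _ => ?_
  rw [emb_single]
  have hwt := wt_add P m₁ m₂
  have h1 : (wt P m₁ : ℚ) ≠ 0 := Nat.cast_ne_zero.mpr (wt_pos P m₁).ne'
  have h2 : (wt P m₂ : ℚ) ≠ 0 := Nat.cast_ne_zero.mpr (wt_pos P m₂).ne'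
  have h3 : (bc P m₁ m₂ : ℚ) ≠ 0 := by
    have : wt P (m₁ + m₂) ≠ 0 := (wt_pos P _).ne'
    rw [hwt] at this
    exact Nat.cast_ne_zero.mpr fun h => this (by rw [h, zero_mul])
  rw [smul_smul, ← Int.cast_smul_eq_zsmul ℚ (c m₁), ← Int.cast_smul_eq_zsmul ℚ (d m₂),
    smul_smul, smul_smul, smul_mul_smul_comm, monomial_mul, mul_one]
  congr 1
  push_cast [hwt]
  field_simp

lemma ev_conv (hσ : ∀ v, P v → σ v ∈ I) (c d : (V →₀ ℕ) →₀ ℤ) :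
    ev hI P σ (cnv (P := P) c d) = ev hI P σ c * ev hI P σ d := by
  rw [cnv, map_finsuppSum]
  rw [show (ev hI P σ c * ev hI P σ d : S)
      = c.sum fun m₁ k₁ => d.sum fun m₂ k₂ => (k₁ • DD hI P σ m₁) * (k₂ • DD hI P σ m₂) by
    rw [ev, Finsupp.linearCombination_apply, Finsupp.sum_mul]
    exact Finsupp.sum_congr fun m₁ _ => by
      rw [Finsupp.linearCombination_apply, Finsupp.mul_sum]]
  refine Finsupp.sum_congr fun m₁ _ => ?_
  rw [map_finsuppSum]
  refine Finsupp.sum_congr fun m₂ _ => ?_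
  rw [ev_single, smul_mul_smul_comm, DD_mul hI hσ, ← smul_smul, zsmul_eq_mul, zsmul_eq_mul,
    zsmul_eq_mul]
  push_cast
  ring



/-- divided power in a ℚ-polynomial ring -/
noncomputable def dpB (f : MvPolynomial V ℚ) (k : ℕ) : MvPolynomial V ℚ :=
  ((k.factorial : ℚ))⁻¹ • f ^ k

lemma dpB_add (f g : MvPolynomial V ℚ) (k : ℕ) :
    dpB (f + g) k = ∑ ij ∈ Finset.HasAntidiagonal.antidiagonal k, dpB f ij.1 * dpB g ij.2 := by
  rw [Finset.Nat.sum_antidiagonal_eq_sum_range_succ_mk, dpB, add_pow, Finset.smul_sum]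
  refine Finset.sum_congr rfl fun i hi => ?_
  rw [mem_range, Nat.lt_succ_iff] at hi
  rw [dpB, dpB, smul_mul_smul_comm]
  have hc : (↑(k.choose i) : MvPolynomial V ℚ) = C ((k.choose i : ℚ)) := by simp
  rw [hc, mul_comm _ (C ((k.choose i : ℚ))), ← smul_eq_C_mul, smul_smul]
  congr 1
  have h2 : (k.choose i : ℚ) * (i.factorial * (k - i).factorial) = k.factorial := by
    exact_mod_cast congrArg (Nat.cast (R := ℚ))
      (by rw [← Nat.choose_mul_factorial_mul_factorial hi]; ring)
  have hi' : (i.factorial : ℚ) ≠ 0 := Nat.cast_ne_zero.mpr i.factorial_pos.ne'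
  have hj' : ((k - i).factorial : ℚ) ≠ 0 := Nat.cast_ne_zero.mpr (k - i).factorial_pos.ne'
  have hk' : (k.factorial : ℚ) ≠ 0 := Nat.cast_ne_zero.mpr k.factorial_pos.ne'
  field_simp
  linarith [h2]
/-- plain evaluation of a monomial -/
noncomputable def evT (σ : V → S) (m : V →₀ ℕ) : S := m.prod fun v k => σ v ^ k

lemma evT_eq_prod (σ : V → S) (m : V →₀ ℕ) {u : Finset V} (hu : m.support ⊆ u) :
    evT σ m = ∏ v ∈ u, σ v ^ m v :=
  Finsupp.prod_of_support_subset m hu _ fun v _ => pow_zero _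

lemma evT_mem (hσ : ∀ v, P v → σ v ∈ I) (m₀ : V →₀ ℕ) (v₀ : V) (hv₀ : P v₀)
    (hd : m₀ v₀ ≠ 0) : evT σ m₀ ∈ I := by
  have hv : v₀ ∈ m₀.support := Finsupp.mem_support_iff.mpr hd
  rw [evT_eq_prod σ m₀ (le_refl _), ← Finset.mul_prod_erase _ _ hv]
  exact I.mul_mem_right _ (I.pow_mem_of_mem (hσ v₀ hv₀) _ (Nat.pos_of_ne_zero hd))

lemma mono (hσ : ∀ v, P v → σ v ∈ I) (m₀ : V →₀ ℕ) (v₀ : V) (hv₀ : P v₀) (hd : m₀ v₀ ≠ 0)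
    (a : ℤ) (i : ℕ) :
    ∃ e : (V →₀ ℕ) →₀ ℤ, emb P e = dpB ((a : ℚ) • monomial m₀ 1) i ∧
      ev hI P σ e = hI.dpow i ((a : S) * evT σ m₀) := by
  have hmem : evT σ m₀ ∈ I := evT_mem hσ m₀ v₀ hv₀ hd
  rcases Nat.eq_zero_or_pos i with hi | hi
  · subst hi
    refine ⟨Finsupp.single 0 1, ?_, ?_⟩
    · rw [emb_single, dpB]
      have h0 : wt P (0 : V →₀ ℕ) = 1 := by
        rw [wt_eq_prod P 0 (u := ∅) (by simp)]; simp
      simp [h0, monomial_zero']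
    · rw [ev_single, hI.dpow_zero (I.mul_mem_left _ hmem)]
      have h0 : DD hI P σ (0 : V →₀ ℕ) = 1 := by
        rw [DD_eq_prod hI hσ 0 (u := ∅) (by simp)]; simp
      simp [h0]
  · have hd1 : 1 ≤ m₀ v₀ := Nat.pos_of_ne_zero hd
    set d := m₀ v₀ with hdd
    set u' := m₀.support.erase v₀ with hu'
    set F := ∏ v ∈ u', if P v then (i * m₀ v).factorial else 1 with hF
    set W : ℕ := (i * (d - 1)).factorial * Nat.choose (i * d) (i * (d - 1)) * F with hW
    have hvmem : v₀ ∈ m₀.support := Finsupp.mem_support_iff.mpr hd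
    have hsupp : (i • m₀).support ⊆ m₀.support := by
      intro v hv
      simp only [Finsupp.mem_support_iff, Finsupp.smul_apply, smul_eq_mul] at *
      exact fun h => hv (by rw [h, mul_zero])
    have hle : i * (d - 1) ≤ i * d := Nat.mul_le_mul_left i (Nat.sub_le d 1)
    have hmulsub : i * (d - 1) + i = i * d := by
      obtain ⟨d', hd'⟩ : ∃ d', d = d' + 1 := ⟨d - 1, by omega⟩
      rw [hd']
      simp [Nat.mul_succ]
    have hwt : wt P (i • m₀) = (i * d).factorial * F := by
      rw [wt_eq_prod P _ hsupp]
      simp only [Finsupp.smul_apply, smul_eq_mul]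
      rw [← Finset.mul_prod_erase _ _ hvmem, if_pos hv₀]
    have hkey : i.factorial * W = wt P (i • m₀) := by
      have h3 := Nat.choose_mul_factorial_mul_factorial hle
      rw [show i * d - i * (d - 1) = i by omega] at h3
      rw [hwt, hW, ← h3]; ring
    -- the core identity
    have hDD : DD hI P σ (i • m₀) = hI.dpow (i * d) (σ v₀) *
        ∏ v ∈ u', (if P v then hI.dpow (i * m₀ v) (σ v) else σ v ^ (i * m₀ v)) := by
      rw [DD_eq_prod hI hσ _ hsupp]
      simp only [Finsupp.smul_apply, smul_eq_mul]
      rw [← Finset.mul_prod_erase _ _ hvmem, if_pos hv₀]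
    have hevT : evT σ m₀ = (σ v₀ ^ (d - 1) * ∏ v ∈ u', σ v ^ m₀ v) * σ v₀ := by
      rw [evT_eq_prod σ _ (le_refl _), ← Finset.mul_prod_erase _ _ hvmem]
      have hpow : σ v₀ ^ (m₀ v₀) = σ v₀ ^ (d - 1) * σ v₀ := by
        conv_lhs => rw [show m₀ v₀ = (d - 1) + 1 by omega]
        rw [pow_succ]
      rw [hpow]
      ring
    have hR : ∏ v ∈ u', (σ v ^ m₀ v) ^ i =
        (F : S) * ∏ v ∈ u', (if P v then hI.dpow (i * m₀ v) (σ v) else σ v ^ (i * m₀ v)) := by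
      rw [hF, Nat.cast_prod, ← Finset.prod_mul_distrib]
      refine Finset.prod_congr rfl fun v hv => ?_
      rw [← pow_mul, mul_comm (m₀ v) i]
      by_cases h : P v
      · rw [if_pos h, if_pos h, hI.factorial_mul_dpow_eq_pow (hσ v h)]
      · rw [if_neg h, if_neg h, Nat.cast_one, one_mul]
    have hmd : hI.dpow (i * (d-1)) (σ v₀) * hI.dpow i (σ v₀)
        = (Nat.choose (i * d) (i * (d-1)) : S) * hI.dpow (i * d) (σ v₀) := by
      rw [hI.mul_dpow (hσ v₀ hv₀), hmulsub]
    have hcore : (W : S) * DD hI P σ (i • m₀) = hI.dpow i (evT σ m₀) := by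
      have step : hI.dpow i (evT σ m₀) = ((i * (d-1)).factorial : S) * (F : S) *
          (∏ v ∈ u', (if P v then hI.dpow (i * m₀ v) (σ v) else σ v ^ (i * m₀ v))) *
          (hI.dpow (i * (d-1)) (σ v₀) * hI.dpow i (σ v₀)) := by
        rw [hevT, hI.dpow_mul (n := i) (hσ v₀ hv₀), mul_pow, ← pow_mul',
          ← hI.factorial_mul_dpow_eq_pow (n := i * (d-1)) (hσ v₀ hv₀), ← Finset.prod_pow, hR]
        ring
      rw [step, hmd, hDD, hW]
      push_cast
      ring
    refine ⟨Finsupp.single (i • m₀) (a ^ i * (W : ℤ)), ?_, ?_⟩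
    · rw [emb_single, dpB, smul_pow, monomial_pow, one_pow, smul_smul, smul_smul]
      congr 1
      have hwtne : (wt P (i • m₀) : ℚ) ≠ 0 := Nat.cast_ne_zero.mpr (wt_pos P _).ne'
      have hine : (i.factorial : ℚ) ≠ 0 := Nat.cast_ne_zero.mpr i.factorial_pos.ne'
      have : ((i.factorial * W : ℕ) : ℚ) = ((wt P (i • m₀) : ℕ) : ℚ) := by rw [hkey]
      push_cast at this ⊢
      field_simp
      linear_combination ((a:ℚ))^i * this
    · rw [ev_single, hI.dpow_mul (n := i) hmem, ← hcore, zsmul_eq_mul]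
      push_cast
      ring


lemma crux (hσ : ∀ v, P v → σ v ∈ I) (s : Finset (V →₀ ℕ)) (c : (V →₀ ℕ) → ℤ) :
    ∀ (_ : ∀ m ∈ s, ∃ v, P v ∧ m v ≠ 0),
    (∑ m ∈ s, (c m : S) * evT σ m) ∈ I ∧
    ∀ k, ∃ e : (V →₀ ℕ) →₀ ℤ,
      emb P e = dpB (∑ m ∈ s, (c m : ℚ) • monomial m (1:ℚ)) k ∧
      ev hI P σ e = hI.dpow k (∑ m ∈ s, (c m : S) * evT σ m) := by
  classical
  induction s using Finset.induction_on with
  | empty =>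
    intro _
    refine ⟨by simp, fun k => ?_⟩
    rcases Nat.eq_zero_or_pos k with hk | hk
    · subst hk
      refine ⟨Finsupp.single 0 1, ?_, ?_⟩
      · rw [emb_single, dpB]
        have h0 : wt P (0 : V →₀ ℕ) = 1 := by
          rw [wt_eq_prod P 0 (u := ∅) (by simp)]; simp
        simp [h0, monomial_zero']
      · rw [ev_single, Finset.sum_empty, hI.dpow_zero I.zero_mem]
        have h0 : DD hI P σ (0 : V →₀ ℕ) = 1 := by
          rw [DD_eq_prod hI hσ 0 (u := ∅) (by simp)]; simp
        simp [h0]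
    · refine ⟨0, ?_, ?_⟩
      · simp [dpB, zero_pow hk.ne']
      · simp [hI.dpow_eval_zero hk.ne']
  | @insert m₀ t hm ih =>
    intro hs
    obtain ⟨v₀, hv₀, hd⟩ := hs m₀ (Finset.mem_insert_self _ _)
    have hst : ∀ m ∈ t, ∃ v, P v ∧ m v ≠ 0 := fun m hmt => hs m (Finset.mem_insert_of_mem hmt)
    obtain ⟨ihmem, ihk⟩ := ih hst
    have hmemu : (c m₀ : S) * evT σ m₀ ∈ I := I.mul_mem_left _ (evT_mem hσ m₀ v₀ hv₀ hd)
    constructor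
    · rw [Finset.sum_insert hm]
      exact I.add_mem hmemu ihmem
    · intro k
      choose E1 h1emb h1ev using fun i => mono hI hσ m₀ v₀ hv₀ hd (c m₀) i
      choose E2 h2emb h2ev using ihk
      refine ⟨∑ ij ∈ Finset.HasAntidiagonal.antidiagonal k, cnv (P := P) (E1 ij.1) (E2 ij.2), ?_, ?_⟩
      · rw [map_sum, Finset.sum_insert hm, dpB_add]
        refine Finset.sum_congr rfl fun ij _ => ?_
        rw [emb_conv, h1emb, h2emb]
      · rw [map_sum, Finset.sum_insert hm, hI.dpow_add (n := k) hmemu ihmem]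
        refine Finset.sum_congr rfl fun ij _ => ?_
        rw [ev_conv hI hσ, h1ev, h2ev]

section AppLemmas

variable {S : Type*} [CommRing S] {I : Ideal S} (hI : DividedPowers I)
variable {V : Type*} [DecidableEq V] {P : V → Prop} [DecidablePred P] {σ : V → S}

lemma sum_support_monomial_eq_map (g : MvPolynomial V ℤ) :
    ∑ m ∈ g.support, ((MvPolynomial.coeff m g : ℤ) : ℚ) • monomial m (1:ℚ)
      = MvPolynomial.map (Int.castRingHom ℚ) g := by
  conv_rhs => rw [g.as_sum]
  rw [map_sum]
  refine Finset.sum_congr rfl fun m _ => ?_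
  rw [map_monomial, smul_monomial, smul_eq_mul, mul_one]
  simp

lemma sum_support_evT_eq_aeval (σ : V → S) (g : MvPolynomial V ℤ) :
    ∑ m ∈ g.support, ((MvPolynomial.coeff m g : ℤ) : S) * evT σ m = aeval σ g := by
  rw [aeval_def, eval₂_eq]
  refine Finset.sum_congr rfl fun m _ => ?_
  rw [evT_eq_prod σ m (le_refl _)]
  simp [algebraMap_int_eq]

lemma support_mem_of_subst_zero (Q : V → Prop) [DecidablePred Q] (f : MvPolynomial V ℤ)
    (h : aeval (fun v => if Q v then 0 else X v : V → MvPolynomial V ℤ) f = 0) :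
    ∀ m ∈ f.support, ∃ v, Q v ∧ m v ≠ 0 := by
  intro m hm
  by_contra hc
  push_neg at hc
  refine MvPolynomial.mem_support_iff.mp hm ?_
  have h2 := congrArg (MvPolynomial.coeff m) h
  rw [coeff_zero] at h2
  rw [← h2]
  conv_rhs => rw [f.as_sum]
  rw [map_sum, coeff_sum, Finset.sum_eq_single m]
  · rw [aeval_monomial]
    have hprod : (m.prod fun v k => (if Q v then 0 else X v : MvPolynomial V ℤ) ^ k)
        = m.prod fun v k => (X v : MvPolynomial V ℤ) ^ k := by
      refine Finsupp.prod_congr fun v hv => ?_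
      rw [if_neg fun hq => Finsupp.mem_support_iff.mp hv (hc v hq)]
    rw [hprod, show algebraMap ℤ (MvPolynomial V ℤ) = Int.castRingHom _ from RingHom.ext_int _ _]
    have : (Int.castRingHom (MvPolynomial V ℤ)) (MvPolynomial.coeff m f)
        = MvPolynomial.C (MvPolynomial.coeff m f) := by
      simp
    rw [this, ← monomial_eq, coeff_monomial, if_pos rfl]
  · intro m' hm' hne
    by_cases hQ : ∃ v, Q v ∧ m' v ≠ 0
    · obtain ⟨v, hQv, hv⟩ := hQ
      rw [aeval_monomial]
      have : (m'.prod fun v k => (if Q v then 0 else X v : MvPolynomial V ℤ) ^ k) = 0 := by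
        rw [Finsupp.prod]
        refine Finset.prod_eq_zero (Finsupp.mem_support_iff.mpr hv) ?_
        rw [if_pos hQv, zero_pow hv]
      rw [this, mul_zero, coeff_zero]
    · push_neg at hQ
      rw [aeval_monomial]
      have hprod : (m'.prod fun v k => (if Q v then 0 else X v : MvPolynomial V ℤ) ^ k)
          = m'.prod fun v k => (X v : MvPolynomial V ℤ) ^ k := by
        refine Finsupp.prod_congr fun v hv => ?_
        rw [if_neg fun hq => Finsupp.mem_support_iff.mp hv (hQ v hq)]
      rw [hprod, show algebraMap ℤ (MvPolynomial V ℤ) = Int.castRingHom _ from RingHom.ext_int _ _]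
      have : (Int.castRingHom (MvPolynomial V ℤ)) (MvPolynomial.coeff m' f)
          = MvPolynomial.C (MvPolynomial.coeff m' f) := by simp
      rw [this, ← monomial_eq, coeff_monomial, if_neg hne]
  · intro h'
    exact absurd hm h'

/-- `eFree`: represent a PD-variable-free integer polynomial as a formal combination. -/
noncomputable def eFree (h : MvPolynomial V ℤ) : (V →₀ ℕ) →₀ ℤ :=
  ∑ m ∈ h.support, Finsupp.single m (MvPolynomial.coeff m h)

lemma wt_eq_one_of_free (m : V →₀ ℕ) (hfree : ∀ v, m v ≠ 0 → ¬ P v) : wt P m = 1 := by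
  rw [wt_eq_prod P m (le_refl _)]
  refine Finset.prod_eq_one fun v hv => ?_
  rw [if_neg (hfree v (Finsupp.mem_support_iff.mp hv))]

lemma DD_eq_evT_of_free (m : V →₀ ℕ) (hfree : ∀ v, m v ≠ 0 → ¬ P v) :
    DD hI P σ m = evT σ m := by
  refine Finsupp.prod_congr fun v hv => ?_
  rw [if_neg (hfree v (Finsupp.mem_support_iff.mp hv))]

lemma emb_eFree (h : MvPolynomial V ℤ)
    (hfree : ∀ m ∈ h.support, ∀ v, m v ≠ 0 → ¬ P v) :
    emb P (eFree h) = MvPolynomial.map (Int.castRingHom ℚ) h := by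
  rw [eFree, map_sum, ← sum_support_monomial_eq_map]
  refine Finset.sum_congr rfl fun m hm => ?_
  rw [emb_single, wt_eq_one_of_free (P := P) m (hfree m hm)]
  simp

lemma ev_eFree (hσ : ∀ v, P v → σ v ∈ I) (h : MvPolynomial V ℤ)
    (hfree : ∀ m ∈ h.support, ∀ v, m v ≠ 0 → ¬ P v) :
    ev hI P σ (eFree h) = aeval σ h := by
  rw [eFree, map_sum, ← sum_support_evT_eq_aeval]
  refine Finset.sum_congr rfl fun m hm => ?_
  rw [ev_single, DD_eq_evT_of_free hI m (hfree m hm), zsmul_eq_mul]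

end AppLemmas

section Witt

variable {S : Type*} [CommRing S] {I : Ideal S} (hI : DividedPowers I)
variable {V : Type*} [DecidableEq V] {P : V → Prop} [DecidablePred P] {σ : V → S}

lemma crux' (hσ : ∀ v, P v → σ v ∈ I) (g : MvPolynomial V ℤ)
    (hg : ∀ m ∈ g.support, ∃ v, P v ∧ m v ≠ 0) (k : ℕ) :
    ∃ e, emb P e = dpB (MvPolynomial.map (Int.castRingHom ℚ) g) k ∧
      ev hI P σ e = hI.dpow k (aeval σ g) := by
  obtain ⟨-, hk⟩ := crux hI hσ g.support (fun m => MvPolynomial.coeff m g) hg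
  obtain ⟨e, he1, he2⟩ := hk k
  exact ⟨e, by rwa [sum_support_monomial_eq_map] at he1,
    by rwa [sum_support_evT_eq_aeval] at he2⟩

lemma crux_mem (hIa : DividedPowers I) (hσ : ∀ v, P v → σ v ∈ I) (g : MvPolynomial V ℤ)
    (hg : ∀ m ∈ g.support, ∃ v, P v ∧ m v ≠ 0) : aeval σ g ∈ I := by
  obtain ⟨h, -⟩ := crux hIa hσ g.support (fun m => MvPolynomial.coeff m g) hg
  rwa [sum_support_evT_eq_aeval] at h

lemma cruxX (hσ : ∀ v, P v → σ v ∈ I) (v : V) (hv : P v) (k : ℕ) :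
    ∃ e, emb P e = dpB (X v) k ∧ ev hI P σ e = hI.dpow k (σ v) := by
  have hg : ∀ m ∈ (X v : MvPolynomial V ℤ).support, ∃ w, P w ∧ m w ≠ 0 := by
    intro m hm
    rw [MvPolynomial.support_X, Finset.mem_singleton] at hm
    subst hm
    exact ⟨v, hv, by simp⟩
  obtain ⟨e, h1, h2⟩ := crux' hI hσ (X v) hg k
  exact ⟨e, by rwa [map_X] at h1, by rwa [aeval_X] at h2⟩

variable (p : ℕ) [hp : Fact p.Prime]

lemma wittAdd_support (j : ℕ) :
    ∀ m ∈ (WittVector.wittAdd p j).support,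
      ∃ v : Fin 2 × ℕ, (fun _ : Fin 2 × ℕ => True) v ∧ m v ≠ 0 := by
  intro m hm
  have hm0 : m ≠ 0 := by
    rintro rfl
    refine MvPolynomial.mem_support_iff.mp hm ?_
    have h := WittVector.constantCoeff_wittAdd p j
    rwa [MvPolynomial.constantCoeff_eq] at h
  obtain ⟨v, hv⟩ : ∃ v, m v ≠ 0 := by
    by_contra hc
    push_neg at hc
    exact hm0 (Finsupp.ext fun v => hc v)
  exact ⟨v, trivial, hv⟩

lemma wittMul_support (j : ℕ) :
    ∀ m ∈ (WittVector.wittMul p j).support,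
      ∃ v : Fin 2 × ℕ, v.1 = (1 : Fin 2) ∧ m v ≠ 0 := by
  refine support_mem_of_subst_zero _ _ ?_
  have h := WittVector.mul_coeff
    (WittVector.mk p fun k => (X ((0 : Fin 2), k) : MvPolynomial (Fin 2 × ℕ) ℤ)) 0 j
  rw [mul_zero, WittVector.zero_coeff] at h
  have h2 : aeval (Function.uncurry
      ![(WittVector.mk p fun k => (X ((0:Fin 2), k) : MvPolynomial (Fin 2 × ℕ) ℤ)).coeff,
        (0 : WittVector p (MvPolynomial (Fin 2 × ℕ) ℤ)).coeff])
      (WittVector.wittMul p j) = 0 := h.symm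
  have huncurry : Function.uncurry
      ![(WittVector.mk p fun k => (X ((0:Fin 2), k) : MvPolynomial (Fin 2 × ℕ) ℤ)).coeff,
        (0 : WittVector p (MvPolynomial (Fin 2 × ℕ) ℤ)).coeff]
      = fun v : Fin 2 × ℕ => if v.1 = (1 : Fin 2) then 0 else X v := by
    funext v
    obtain ⟨b, k⟩ := v
    fin_cases b
    · simp [Function.uncurry, WittVector.coeff_mk]
    · simp [Function.uncurry]
  rwa [huncurry] at h2

end Witt

section Master

/-- `cA p k = (p^k - 1)!`, the divided Witt coefficient. -/
def cA (p k : ℕ) : ℕ := (p ^ k - 1).factorial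

lemma cA_mul (p : ℕ) (hp : 0 < p) (k : ℕ) : p ^ k * cA p k = (p ^ k).factorial :=
  Nat.mul_factorial_pred (pow_pos hp k).ne'

lemma scalar_key {p : ℕ} (hp : 0 < p) {i j : ℕ} (hj : j ≤ i) :
    (p:ℚ) ^ i * ((cA p (i-j) : ℚ) * (((p ^ (i-j)).factorial : ℚ))⁻¹) = (p:ℚ) ^ j := by
  have h1 : ((p ^ (i-j) * cA p (i-j) : ℕ) : ℚ) = ((p ^ (i-j)).factorial : ℚ) := by
    rw [cA_mul p hp]
  push_cast at h1
  have h3 : (p:ℚ) ^ i = (p:ℚ) ^ j * (p:ℚ) ^ (i-j) := by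
    rw [← pow_add]; congr 1; omega
  have h4 : (((p ^ (i-j)).factorial : ℚ)) ≠ 0 := Nat.cast_ne_zero.mpr (Nat.factorial_pos _).ne'
  rw [h3]
  field_simp
  linear_combination h1

variable {S : Type*} [CommRing S] {I : Ideal S} (hI : DividedPowers I)
variable {V : Type*} [DecidableEq V]

lemma natCast_pow_eq_C (p j : ℕ) :
    (p : MvPolynomial V ℚ) ^ j = C ((p:ℚ) ^ j) := by
  rw [← map_natCast (C : ℚ →+* MvPolynomial V ℚ) p, ← C_pow]

lemma emb_scaled (P : V → Prop) [DecidablePred P] {p : ℕ} (hp : 0 < p) (i : ℕ)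
    (g : ℕ → MvPolynomial V ℤ) (E : ℕ → ((V →₀ ℕ) →₀ ℤ))
    (hE : ∀ j, j ≤ i → emb P (E j) = dpB (MvPolynomial.map (Int.castRingHom ℚ) (g j)) (p ^ (i-j))) :
    (p:ℚ) ^ i • emb P (∑ j ∈ Finset.range (i+1), (cA p (i-j) : ℤ) • E j)
      = ∑ j ∈ Finset.range (i+1), (p : MvPolynomial V ℚ) ^ j *
          (MvPolynomial.map (Int.castRingHom ℚ) (g j)) ^ (p ^ (i-j)) := by
  rw [map_sum, Finset.smul_sum]
  refine Finset.sum_congr rfl fun j hj => ?_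
  rw [Finset.mem_range, Nat.lt_succ_iff] at hj
  rw [map_zsmul, hE j hj, dpB, ← Int.cast_smul_eq_zsmul ℚ, smul_smul, smul_smul,
    natCast_pow_eq_C, C_mul']
  congr 1
  push_cast
  rw [← scalar_key hp hj]
  ring

variable (p : ℕ) [hp : Fact p.Prime]

lemma bind_witt_expand (f : ℕ → MvPolynomial V ℤ) (i : ℕ) :
    MvPolynomial.map (Int.castRingHom ℚ) (bind₁ f (wittPolynomial p ℤ i))
      = ∑ j ∈ Finset.range (i+1), (p : MvPolynomial V ℚ) ^ j *
          (MvPolynomial.map (Int.castRingHom ℚ) (f j)) ^ (p ^ (i-j)) := by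
  rw [show (bind₁ f) (wittPolynomial p ℤ i) = aeval f (wittPolynomial p ℤ i) from rfl,
    aeval_wittPolynomial, map_sum]
  refine Finset.sum_congr rfl fun j _ => ?_
  rw [map_mul, map_pow, map_pow, map_natCast]

lemma rename_witt_expand (b : Fin 2) (i : ℕ) :
    MvPolynomial.map (Int.castRingHom ℚ) (rename (Prod.mk b) (wittPolynomial p ℤ i))
      = ∑ j ∈ Finset.range (i+1), (p : MvPolynomial (Fin 2 × ℕ) ℚ) ^ j *
          (X (b, j)) ^ (p ^ (i-j)) := by
  rw [map_rename, map_wittPolynomial, wittPolynomial_eq_sum_C_mul_X_pow, map_sum]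
  refine Finset.sum_congr rfl fun j _ => ?_
  simp only [map_mul, map_pow, rename_C, rename_X, map_natCast]

end Master

section TheMasters

variable {S : Type*} [CommRing S] {I : Ideal S} (hI : DividedPowers I)
variable (p : ℕ) [hp : Fact p.Prime]

lemma addMaster (a b : ℕ → S) (ha : ∀ k, a k ∈ I) (hb : ∀ k, b k ∈ I) (i : ℕ) :
    ∑ j ∈ Finset.range (i+1), (cA p (i-j) : S) * hI.dpow (p^(i-j))
        (aeval (Function.uncurry ![a, b]) (WittVector.wittAdd p j))
    = (∑ j ∈ Finset.range (i+1), (cA p (i-j) : S) * hI.dpow (p^(i-j)) (a j))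
      + ∑ j ∈ Finset.range (i+1), (cA p (i-j) : S) * hI.dpow (p^(i-j)) (b j) := by
  classical
  set σ : Fin 2 × ℕ → S := Function.uncurry ![a, b] with hσdef
  have hσ : ∀ v : Fin 2 × ℕ, (fun _ : Fin 2 × ℕ => True) v → σ v ∈ I := by
    rintro ⟨c, k⟩ -
    fin_cases c
    · simpa [hσdef, Function.uncurry] using ha k
    · simpa [hσdef, Function.uncurry] using hb k
  have hc0 : ∀ j, σ ((0 : Fin 2), j) = a j := fun j => by simp [hσdef, Function.uncurry]
  have hc1 : ∀ j, σ ((1 : Fin 2), j) = b j := fun j => by simp [hσdef, Function.uncurry]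
  choose E hE1 hE2 using fun j => crux' hI (P := fun _ : Fin 2 × ℕ => True) hσ
    (WittVector.wittAdd p j) (wittAdd_support p j) (p ^ (i - j))
  choose Ea hEa1 hEa2 using fun j => cruxX hI (P := fun _ : Fin 2 × ℕ => True) hσ
    ((0 : Fin 2), j) trivial (p ^ (i - j))
  choose Eb hEb1 hEb2 using fun j => cruxX hI (P := fun _ : Fin 2 × ℕ => True) hσ
    ((1 : Fin 2), j) trivial (p ^ (i - j))
  have hp0 : 0 < p := hp.out.pos
  have hpne : ((p:ℚ)^i) ≠ 0 := pow_ne_zero _ (Nat.cast_ne_zero.mpr hp0.ne')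
  have key : (∑ j ∈ Finset.range (i+1), (cA p (i-j) : ℤ) • E j)
      = ∑ j ∈ Finset.range (i+1), (cA p (i-j) : ℤ) • (Ea j + Eb j) := by
    apply emb_inj (P := fun _ : Fin 2 × ℕ => True)
    have hkey2 : (p:ℚ)^i • (emb (fun _ : Fin 2 × ℕ => True))
          (∑ j ∈ Finset.range (i+1), (cA p (i-j) : ℤ) • E j)
        = (p:ℚ)^i • (emb (fun _ : Fin 2 × ℕ => True))
          (∑ j ∈ Finset.range (i+1), (cA p (i-j) : ℤ) • (Ea j + Eb j)) := by
      have split : (∑ j ∈ Finset.range (i+1), (cA p (i-j) : ℤ) • (Ea j + Eb j))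
          = (∑ j ∈ Finset.range (i+1), (cA p (i-j) : ℤ) • Ea j)
            + ∑ j ∈ Finset.range (i+1), (cA p (i-j) : ℤ) • Eb j := by
        rw [← Finset.sum_add_distrib]
        exact Finset.sum_congr rfl fun j _ => smul_add _ _ _
      rw [split, map_add, smul_add,
        emb_scaled (fun _ : Fin 2 × ℕ => True) hp0 i (WittVector.wittAdd p) E (fun j _ => hE1 j),
        emb_scaled (fun _ : Fin 2 × ℕ => True) hp0 i (fun j => X ((0:Fin 2), j)) Ea
          (fun j _ => by rw [hEa1 j, map_X]),
        emb_scaled (fun _ : Fin 2 × ℕ => True) hp0 i (fun j => X ((1:Fin 2), j)) Eb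
          (fun j _ => by rw [hEb1 j, map_X])]
      simp only [map_X]
      rw [← bind_witt_expand p (WittVector.wittAdd p) i, ← rename_witt_expand p 0 i,
        ← rename_witt_expand p 1 i, ← map_add]
      congr 1
      have hw : WittVector.wittAdd p = wittStructureInt p (X 0 + X 1) := rfl
      rw [hw, wittStructureInt_prop, map_add, bind₁_X_right, bind₁_X_right]
    have h3 := congrArg (fun f => ((p:ℚ)^i)⁻¹ • f) hkey2
    rwa [inv_smul_smul₀ hpne, inv_smul_smul₀ hpne] at h3
  have lhs : ∑ j ∈ Finset.range (i+1), (cA p (i-j) : S) * hI.dpow (p^(i-j))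
        (aeval σ (WittVector.wittAdd p j))
      = ev hI (fun _ : Fin 2 × ℕ => True) σ (∑ j ∈ Finset.range (i+1), (cA p (i-j) : ℤ) • E j) := by
    rw [map_sum]
    refine Finset.sum_congr rfl fun j _ => ?_
    rw [map_zsmul, hE2 j, zsmul_eq_mul]
    push_cast
    ring
  rw [lhs, key, map_sum, ← Finset.sum_add_distrib]
  refine Finset.sum_congr rfl fun j _ => ?_
  rw [map_zsmul, map_add, hEa2 j, hEb2 j, hc0 j, hc1 j, zsmul_eq_mul]
  push_cast
  ring

end TheMasters

/-- The PD-variable predicate for the multiplication case: second block of variables. -/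
def Pmul : Fin 2 × ℕ → Prop := fun v => v.1 = (1 : Fin 2)

instance : DecidablePred Pmul := fun v => inferInstanceAs (Decidable (v.1 = 1))

section TheMulMaster

variable {S : Type*} [CommRing S] {I : Ideal S} (hI : DividedPowers I)
variable (p : ℕ) [hp : Fact p.Prime]

lemma mulMaster (c a : ℕ → S) (ha : ∀ k, a k ∈ I) (i : ℕ) :
    ∑ j ∈ Finset.range (i+1), (cA p (i-j) : S) * hI.dpow (p^(i-j))
        (aeval (Function.uncurry ![c, a]) (WittVector.wittMul p j))
    = (aeval c (wittPolynomial p ℤ i)) *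
      ∑ j ∈ Finset.range (i+1), (cA p (i-j) : S) * hI.dpow (p^(i-j)) (a j) := by
  classical
  set σ : Fin 2 × ℕ → S := Function.uncurry ![c, a] with hσdef
  have hσ : ∀ v, Pmul v → σ v ∈ I := by
    rintro ⟨b, k⟩ hb
    fin_cases b
    · exact absurd hb (by simp [Pmul])
    · simpa [hσdef, Function.uncurry] using ha k
  have hc1 : ∀ j, σ ((1 : Fin 2), j) = a j := fun j => by simp [hσdef, Function.uncurry]
  have hcomp : σ ∘ (Prod.mk (0 : Fin 2)) = c := by
    funext k
    simp [hσdef, Function.uncurry]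
  choose E hE1 hE2 using fun j => crux' hI (P := Pmul) hσ (WittVector.wittMul p j)
    (wittMul_support p j) (p ^ (i - j))
  choose Ea hEa1 hEa2 using fun j => cruxX hI (P := Pmul) hσ ((1 : Fin 2), j) rfl (p ^ (i - j))
  have hp0 : 0 < p := hp.out.pos
  have hpne : ((p:ℚ)^i) ≠ 0 := pow_ne_zero _ (Nat.cast_ne_zero.mpr hp0.ne')
  set h0 : MvPolynomial (Fin 2 × ℕ) ℤ := rename (Prod.mk (0 : Fin 2)) (wittPolynomial p ℤ i)
    with hh0
  have hfree : ∀ m ∈ h0.support, ∀ v, m v ≠ 0 → ¬ Pmul v := by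
    intro m hm v hv
    have hvars : v ∈ h0.vars := (mem_vars v).mpr ⟨m, hm, Finsupp.mem_support_iff.mpr hv⟩
    rw [hh0] at hvars
    have h2 := vars_rename (Prod.mk (0 : Fin 2)) (wittPolynomial p ℤ i) hvars
    rw [Finset.mem_image] at h2
    obtain ⟨k, -, rfl⟩ := h2
    simp [Pmul]
  have key : cnv (P := Pmul) (eFree h0) (∑ j ∈ Finset.range (i+1), (cA p (i-j) : ℤ) • Ea j)
      = ∑ j ∈ Finset.range (i+1), (cA p (i-j) : ℤ) • E j := by
    apply emb_inj (P := Pmul)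
    have hkey2 : (p:ℚ)^i • (emb Pmul) (cnv (P := Pmul) (eFree h0)
          (∑ j ∈ Finset.range (i+1), (cA p (i-j) : ℤ) • Ea j))
        = (p:ℚ)^i • (emb Pmul) (∑ j ∈ Finset.range (i+1), (cA p (i-j) : ℤ) • E j) := by
      rw [emb_conv, emb_eFree h0 hfree, ← mul_smul_comm,
        emb_scaled Pmul hp0 i (fun j => X ((1:Fin 2), j)) Ea (fun j _ => by rw [hEa1 j, map_X]),
        emb_scaled Pmul hp0 i (WittVector.wittMul p) E (fun j _ => hE1 j)]
      simp only [map_X]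
      rw [hh0, ← rename_witt_expand p 1 i, ← bind_witt_expand p (WittVector.wittMul p) i,
        ← map_mul]
      congr 1
      have hw : WittVector.wittMul p = wittStructureInt p (X 0 * X 1) := rfl
      rw [hw, wittStructureInt_prop, map_mul, bind₁_X_right, bind₁_X_right]
    have h3 := congrArg (fun f => ((p:ℚ)^i)⁻¹ • f) hkey2
    rwa [inv_smul_smul₀ hpne, inv_smul_smul₀ hpne] at h3
  have lhs : ∑ j ∈ Finset.range (i+1), (cA p (i-j) : S) * hI.dpow (p^(i-j))
        (aeval σ (WittVector.wittMul p j))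
      = ev hI Pmul σ (∑ j ∈ Finset.range (i+1), (cA p (i-j) : ℤ) • E j) := by
    rw [map_sum]
    refine Finset.sum_congr rfl fun j _ => ?_
    rw [map_zsmul, hE2 j, zsmul_eq_mul]
    push_cast
    ring
  rw [lhs, ← key, ev_conv hI hσ, ev_eFree hI hσ h0 hfree, hh0, aeval_rename, hcomp]
  congr 1
  rw [map_sum]
  refine Finset.sum_congr rfl fun j _ => ?_
  rw [map_zsmul, hEa2 j, hc1 j, zsmul_eq_mul]
  push_cast
  ring

end TheMulMaster

section Phi

variable (p : ℕ) [hp : Fact p.Prime] {S : Type*} [CommRing S] {I : Ideal S}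

/-- The divided Witt map, componentwise, on a Witt vector lift. -/
noncomputable def PhiFun (hI : DividedPowers I) (w : WittVector p S) (i : ℕ) : S :=
  ∑ j ∈ Finset.range (i+1), (cA p (i-j) : S) * hI.dpow (p^(i-j)) (w.coeff j)

lemma PhiFun_mem (hI : DividedPowers I) (w : WittVector p S) (hw : ∀ k, w.coeff k ∈ I)
    (i : ℕ) : PhiFun p hI w i ∈ I :=
  Submodule.sum_mem I fun j _ =>
    I.mul_mem_left _ (hI.dpow_mem (pow_ne_zero _ hp.out.ne_zero) (hw j))

lemma PhiFun_step (hI : DividedPowers I) (w : WittVector p S) (hw : ∀ k, w.coeff k ∈ I)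
    (i : ℕ) : PhiFun p hI w i
      = w.coeff i + ∑ j ∈ Finset.range i, (cA p (i-j) : S) * hI.dpow (p^(i-j)) (w.coeff j) := by
  rw [PhiFun, Finset.sum_range_succ]
  have h1 : cA p (i - i) = 1 := by simp [cA]
  have h2 : p ^ (i - i) = 1 := by simp
  rw [h1, h2, hI.dpow_one (hw i), Nat.cast_one, one_mul, add_comm]

lemma PhiFun_ghost (hI : DividedPowers I) (w : WittVector p S) (hw : ∀ k, w.coeff k ∈ I)
    (i : ℕ) : (p : S) ^ i * PhiFun p hI w i = aeval w.coeff (wittPolynomial p ℤ i) := by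
  rw [aeval_wittPolynomial, PhiFun, Finset.mul_sum]
  refine Finset.sum_congr rfl fun j hj => ?_
  rw [Finset.mem_range, Nat.lt_succ_iff] at hj
  have hnat : p ^ i * cA p (i-j) = p ^ j * (p ^ (i-j)).factorial := by
    rw [← cA_mul p hp.out.pos, show i = j + (i - j) by omega]
    rw [pow_add, mul_assoc, Nat.add_sub_cancel_left]
  calc (p:S) ^ i * ((cA p (i-j) : S) * hI.dpow (p^(i-j)) (w.coeff j))
      = ((p ^ i * cA p (i-j) : ℕ) : S) * hI.dpow (p^(i-j)) (w.coeff j) := by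
        push_cast; ring
    _ = ((p ^ j * (p ^ (i-j)).factorial : ℕ) : S) * hI.dpow (p^(i-j)) (w.coeff j) := by
        rw [hnat]
    _ = (p:S) ^ j * (((p ^ (i-j)).factorial : S) * hI.dpow (p^(i-j)) (w.coeff j)) := by
        push_cast; ring
    _ = (p:S) ^ j * w.coeff j ^ p ^ (i-j) := by
        rw [hI.factorial_mul_dpow_eq_pow (hw j)]

end Phi

section Inv

variable (p : ℕ) {S : Type*} [CommRing S] {I : Ideal S}

/-- recursive inverse of the divided Witt coordinates -/
noncomputable def invCoeff (hI : DividedPowers I) (b : ℕ → S) : ℕ → S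
  | i => b i - ∑ j ∈ (Finset.range i).attach,
      (cA p (i - j.1) : S) * hI.dpow (p ^ (i - j.1)) (invCoeff hI b j.1)
  decreasing_by exact Finset.mem_range.mp j.2

lemma invCoeff_eq (hI : DividedPowers I) (b : ℕ → S) (i : ℕ) :
    invCoeff p hI b i = b i - ∑ j ∈ Finset.range i,
      (cA p (i - j) : S) * hI.dpow (p ^ (i - j)) (invCoeff p hI b j) := by
  conv_lhs => rw [invCoeff]
  congr 1
  exact Finset.sum_attach _ fun j =>
    (cA p (i - j) : S) * hI.dpow (p ^ (i - j)) (invCoeff p hI b j)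

lemma invCoeff_mem (hp : p ≠ 0) (hI : DividedPowers I) (b : ℕ → S) (hb : ∀ k, b k ∈ I)
    (i : ℕ) : invCoeff p hI b i ∈ I := by
  induction i using Nat.strong_induction_on with
  | _ i IH =>
    rw [invCoeff_eq]
    refine sub_mem (hb i) (Submodule.sum_mem I fun j hj => ?_)
    exact I.mul_mem_left _ (hI.dpow_mem (pow_ne_zero _ hp) (IH j (Finset.mem_range.mp hj)))

end Inv

end Stmt16

/-- The `i`-th ghost (Witt polynomial) component of a truncated Witt vector, defined via a lift;
for `i < n` it only depends on the first `i + 1` coefficients, so this is well defined. -/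
noncomputable def ghostT (p : ℕ) [Fact p.Prime] {n : ℕ} {S : Type*} [CommRing S]
    (i : Fin n) (x : TruncatedWittVector p n S) : S :=
  WittVector.ghostComponent (i : ℕ) x.out

theorem stmt16 (p : ℕ) [Fact p.Prime] (n : ℕ) (S : Type*) [CommRing S]
    (I : Ideal S) (hI : DividedPowers I) (hnil : IsNilpotent (p : S)) :
    ∃ Φ : {x : TruncatedWittVector p (n + 1) S // ∀ i, x.coeff i ∈ I} → (Fin (n + 1) → I),
      Function.Bijective Φ ∧
      -- `Φ` is additive
      (∀ x y z : {x : TruncatedWittVector p (n + 1) S // ∀ i, x.coeff i ∈ I},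
        z.val = x.val + y.val → ∀ i, (Φ z i : S) = (Φ x i : S) + (Φ y i : S)) ∧
      -- the components of `Φ` are the divided Witt polynomials: `p^i · Φ_i = w_i`
      (∀ (x : {x : TruncatedWittVector p (n + 1) S // ∀ i, x.coeff i ∈ I}) (i : Fin (n + 1)),
        (p : S) ^ (i : ℕ) * (Φ x i : S) = ghostT p i x.val) ∧
      -- `Φ` is `W_{n+1}(S)`-linear, the action on the `i`-th factor being through `w_i`
      (∀ (ξ : TruncatedWittVector p (n + 1) S)
         (x z : {x : TruncatedWittVector p (n + 1) S // ∀ i, x.coeff i ∈ I}),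
        z.val = ξ * x.val → ∀ i, (Φ z i : S) = ghostT p i ξ * (Φ x i : S)) := by
  classical
  have hp0 : (0:ℕ) < p := (Fact.out : p.Prime).pos
  have hout : ∀ (x : {x : TruncatedWittVector p (n + 1) S // ∀ i, x.coeff i ∈ I}) (k : ℕ),
      x.val.out.coeff k ∈ I := by
    intro x k
    by_cases hk : k < n + 1
    · rw [show x.val.out.coeff k = x.val.coeff ⟨k, hk⟩ from
        TruncatedWittVector.coeff_out x.val ⟨k, hk⟩]
      exact x.2 _
    · have h0 : x.val.out.coeff k = 0 := dif_neg hk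
      rw [h0]
      exact I.zero_mem
  have hghost : ∀ (w : TruncatedWittVector p (n+1) S) (i : Fin (n+1)),
      ghostT p i w = aeval w.out.coeff (wittPolynomial p ℤ (i : ℕ)) := fun w i =>
    WittVector.ghostComponent_apply (i : ℕ) w.out
  have haddcoeff : ∀ (x y z : {x : TruncatedWittVector p (n + 1) S // ∀ i, x.coeff i ∈ I}),
      z.val = x.val + y.val → ∀ (j : ℕ), j < n + 1 →
      z.val.out.coeff j = aeval (Function.uncurry ![x.val.out.coeff, y.val.out.coeff])
        (WittVector.wittAdd p j) := by
    intro x y z hz j hj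
    rw [show z.val.out.coeff j = z.val.coeff ⟨j, hj⟩ from
      TruncatedWittVector.coeff_out z.val ⟨j, hj⟩, hz]
    have h2 : (x.val + y.val).coeff ⟨j, hj⟩ = (x.val.out + y.val.out).coeff j := by
      show (WittVector.truncateFun (n+1) (x.val.out + y.val.out)).coeff ⟨j, hj⟩ = _
      rw [WittVector.coeff_truncateFun]
    rw [h2, WittVector.add_coeff]
    rfl
  have hmulcoeff : ∀ (ξ : TruncatedWittVector p (n+1) S)
      (x z : {x : TruncatedWittVector p (n + 1) S // ∀ i, x.coeff i ∈ I}),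
      z.val = ξ * x.val → ∀ (j : ℕ), j < n + 1 →
      z.val.out.coeff j = aeval (Function.uncurry ![ξ.out.coeff, x.val.out.coeff])
        (WittVector.wittMul p j) := by
    intro ξ x z hz j hj
    rw [show z.val.out.coeff j = z.val.coeff ⟨j, hj⟩ from
      TruncatedWittVector.coeff_out z.val ⟨j, hj⟩, hz]
    have h2 : (ξ * x.val).coeff ⟨j, hj⟩ = (ξ.out * x.val.out).coeff j := by
      show (WittVector.truncateFun (n+1) (ξ.out * x.val.out)).coeff ⟨j, hj⟩ = _
      rw [WittVector.coeff_truncateFun]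
    rw [h2, WittVector.mul_coeff]
    rfl
  refine ⟨fun x i => ⟨Stmt16.PhiFun p hI x.val.out (i : ℕ),
      Stmt16.PhiFun_mem p hI _ (hout x) (i : ℕ)⟩, ⟨?_, ?_⟩, ?_, ?_, ?_⟩
  · -- injective
    intro x y h
    have hc : ∀ k, k < n + 1 → x.val.out.coeff k = y.val.out.coeff k := by
      intro k
      induction k using Nat.strong_induction_on with
      | _ k IH =>
        intro hk
        have h1 : Stmt16.PhiFun p hI x.val.out k = Stmt16.PhiFun p hI y.val.out k := by
          have h2 := congrArg (fun f => (f ⟨k, hk⟩ : I)) h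
          exact congrArg Subtype.val h2
        rw [Stmt16.PhiFun_step p hI _ (hout x) k, Stmt16.PhiFun_step p hI _ (hout y) k] at h1
        have hsum : ∑ j ∈ Finset.range k,
              (Stmt16.cA p (k-j) : S) * hI.dpow (p^(k-j)) (x.val.out.coeff j)
            = ∑ j ∈ Finset.range k,
              (Stmt16.cA p (k-j) : S) * hI.dpow (p^(k-j)) (y.val.out.coeff j) :=
          Finset.sum_congr rfl fun j hj => by
            rw [IH j (Finset.mem_range.mp hj) (lt_trans (Finset.mem_range.mp hj) hk)]
        rw [hsum] at h1
        exact add_right_cancel h1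
    apply Subtype.ext
    apply TruncatedWittVector.ext
    intro i
    have h3 := hc (i : ℕ) i.isLt
    rwa [TruncatedWittVector.coeff_out x.val i, TruncatedWittVector.coeff_out y.val i] at h3
  · -- surjective
    intro b
    set bS : ℕ → S := fun k => if hk : k < n + 1 then (b ⟨k, hk⟩ : S) else 0 with hbS
    have hbmem : ∀ k, bS k ∈ I := by
      intro k
      rw [hbS]
      dsimp only
      split
      · exact (b _).2
      · exact I.zero_mem
    have hamem : ∀ k, Stmt16.invCoeff p hI bS k ∈ I :=
      Stmt16.invCoeff_mem p hp0.ne' hI bS hbmem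
    refine ⟨⟨TruncatedWittVector.mk p fun i : Fin (n+1) => Stmt16.invCoeff p hI bS (i : ℕ), fun i => by
      rw [TruncatedWittVector.coeff_mk]; exact hamem (i : ℕ)⟩, ?_⟩
    funext i
    apply Subtype.ext
    have houtmk : ∀ k, k < n + 1 →
        (TruncatedWittVector.mk p fun i : Fin (n+1) => Stmt16.invCoeff p hI bS (i : ℕ)).out.coeff k
          = Stmt16.invCoeff p hI bS k := by
      intro k hk
      rw [show (TruncatedWittVector.mk p fun i : Fin (n+1) => Stmt16.invCoeff p hI bS (i : ℕ)).out.coeff k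
          = (TruncatedWittVector.mk p fun i : Fin (n+1) => Stmt16.invCoeff p hI bS (i : ℕ)).coeff ⟨k, hk⟩ from
        TruncatedWittVector.coeff_out _ ⟨k, hk⟩, TruncatedWittVector.coeff_mk]
    show Stmt16.PhiFun p hI _ (i : ℕ) = (b i : S)
    rw [Stmt16.PhiFun_step p hI _ (hout ⟨_, fun i => by
      rw [TruncatedWittVector.coeff_mk]; exact hamem (i : ℕ)⟩) (i : ℕ)]
    rw [houtmk (i : ℕ) i.isLt]
    have hsum : ∑ j ∈ Finset.range (i : ℕ),
          (Stmt16.cA p ((i:ℕ)-j) : S) * hI.dpow (p^((i:ℕ)-j))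
            ((TruncatedWittVector.mk p fun i : Fin (n+1) => Stmt16.invCoeff p hI bS (i : ℕ)).out.coeff j)
        = ∑ j ∈ Finset.range (i : ℕ),
          (Stmt16.cA p ((i:ℕ)-j) : S) * hI.dpow (p^((i:ℕ)-j)) (Stmt16.invCoeff p hI bS j) :=
      Finset.sum_congr rfl fun j hj => by
        rw [houtmk j (lt_trans (Finset.mem_range.mp hj) i.isLt)]
    rw [hsum, Stmt16.invCoeff_eq p hI bS (i : ℕ), sub_add_cancel]
    rw [hbS]
    dsimp only
    rw [dif_pos i.isLt]
  · -- additive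
    intro x y z hz i
    show Stmt16.PhiFun p hI z.val.out (i : ℕ)
      = Stmt16.PhiFun p hI x.val.out (i : ℕ) + Stmt16.PhiFun p hI y.val.out (i : ℕ)
    have hL : Stmt16.PhiFun p hI z.val.out (i : ℕ)
        = ∑ j ∈ Finset.range ((i:ℕ)+1), (Stmt16.cA p ((i:ℕ)-j) : S) * hI.dpow (p^((i:ℕ)-j))
            (aeval (Function.uncurry ![x.val.out.coeff, y.val.out.coeff])
              (WittVector.wittAdd p j)) := by
      rw [Stmt16.PhiFun]
      refine Finset.sum_congr rfl fun j hj => ?_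
      rw [haddcoeff x y z hz j
        (lt_of_le_of_lt (Nat.lt_succ_iff.mp (Finset.mem_range.mp hj)) i.isLt)]
    rw [hL, Stmt16.addMaster hI p _ _ (hout x) (hout y) (i : ℕ)]
    rfl
  · -- divided Witt polynomials
    intro x i
    show (p:S) ^ (i:ℕ) * Stmt16.PhiFun p hI x.val.out (i : ℕ) = ghostT p i x.val
    rw [Stmt16.PhiFun_ghost p hI _ (hout x) (i : ℕ), hghost x.val i]
  · -- semilinear
    intro ξ x z hz i
    show Stmt16.PhiFun p hI z.val.out (i : ℕ)
      = ghostT p i ξ * Stmt16.PhiFun p hI x.val.out (i : ℕ)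
    have hL : Stmt16.PhiFun p hI z.val.out (i : ℕ)
        = ∑ j ∈ Finset.range ((i:ℕ)+1), (Stmt16.cA p ((i:ℕ)-j) : S) * hI.dpow (p^((i:ℕ)-j))
            (aeval (Function.uncurry ![ξ.out.coeff, x.val.out.coeff])
              (WittVector.wittMul p j)) := by
      rw [Stmt16.PhiFun]
      refine Finset.sum_congr rfl fun j hj => ?_
      rw [hmulcoeff ξ x z hz j
        (lt_of_le_of_lt (Nat.lt_succ_iff.mp (Finset.mem_range.mp hj)) i.isLt)]
    rw [hL, Stmt16.mulMaster hI p _ _ (hout x) (i : ℕ), hghost ξ i]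
    rfl
end
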